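/- Let a : ℕ → ℂ be finitely supported. Then |Re ∑_{n=0}^∞ √((n+1)(n+2))·conj(a_n)·a_{n+2}| ≤ ∑_{n=0}^∞ (n + 1/2)·|a_n|². -/

import Mathlib

open Complex

/-- Positivity step in bounding the position operator by `|A|^{1/2}` for the quantum
harmonic oscillator: for finitely supported `a : ℕ → ℂ`,
`|Re ∑_{n=0}^∞ √((n+1)(n+2))·conj(a_n)·a_{n+2}| ≤ ∑_{n=0}^∞ (n + 1/2)·|a_n|²`. -/
theorem oscillator_offdiagonal_bound (a : ℕ → ℂ)
    (ha : (Function.support a).Finite) :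
    |(∑' n : ℕ, (Real.sqrt (((n : ℝ) + 1) * ((n : ℝ) + 2)) : ℂ)
        * ((starRingEnd ℂ) (a n) * a (n + 2))).re|
      ≤ ∑' n : ℕ, ((n : ℝ) + 1 / 2) * ‖a n‖ ^ 2 := by
  obtain ⟨N, hN⟩ : ∃ N, ∀ n, N ≤ n → a n = 0 := by
    refine ⟨ha.toFinset.sup id + 1, fun n hn => ?_⟩
    by_contra h
    have hmem : n ∈ ha.toFinset := by simpa [Function.mem_support] using h
    have := Finset.le_sup (f := id) hmem
    simp only [id] at this
    omega
  set T : ℕ → ℂ := fun n => (Real.sqrt (((n : ℝ) + 1) * ((n : ℝ) + 2)) : ℂ)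
        * ((starRingEnd ℂ) (a n) * a (n + 2)) with hT
  have hL : (∑' n : ℕ, T n) = ∑ n ∈ Finset.range N, T n := by
    refine tsum_eq_sum fun n hn => ?_
    have : a n = 0 := hN n (by simpa using hn)
    simp [hT, this]
  have hR : (∑' n : ℕ, ((n : ℝ) + 1 / 2) * ‖a n‖ ^ 2)
      = ∑ n ∈ Finset.range N, ((n : ℝ) + 1 / 2) * ‖a n‖ ^ 2 := by
    refine tsum_eq_sum fun n hn => ?_
    have : a n = 0 := hN n (by simpa using hn)
    simp [this]
  rw [hL, hR]
  have key : ∀ n : ℕ, ‖T n‖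
      ≤ ((n : ℝ) + 1) / 2 * ‖a n‖ ^ 2 + ((n : ℝ) + 2) / 2 * ‖a (n + 2)‖ ^ 2 := by
    intro n
    have h1 : (0:ℝ) ≤ (n:ℝ) + 1 := by positivity
    have h2 : (0:ℝ) ≤ (n:ℝ) + 2 := by positivity
    have hsplit : Real.sqrt (((n : ℝ) + 1) * ((n : ℝ) + 2))
        = Real.sqrt ((n:ℝ) + 1) * Real.sqrt ((n:ℝ) + 2) := Real.sqrt_mul h1 _
    have hx : Real.sqrt ((n:ℝ) + 1) ^ 2 = (n:ℝ) + 1 := Real.sq_sqrt h1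
    have hy : Real.sqrt ((n:ℝ) + 2) ^ 2 = (n:ℝ) + 2 := Real.sq_sqrt h2
    have hnorm : ‖T n‖ = Real.sqrt ((n:ℝ) + 1) * Real.sqrt ((n:ℝ) + 2)
        * (‖a n‖ * ‖a (n + 2)‖) := by
      simp only [hT, norm_mul, Complex.norm_real, Real.norm_eq_abs,
        _root_.abs_of_nonneg (Real.sqrt_nonneg _), hsplit, RingHomIsometric.norm_map]
    rw [hnorm]
    nlinarith [sq_nonneg (Real.sqrt ((n:ℝ) + 1) * ‖a n‖ - Real.sqrt ((n:ℝ) + 2) * ‖a (n + 2)‖),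
      norm_nonneg (a n), norm_nonneg (a (n + 2)), Real.sqrt_nonneg ((n:ℝ) + 1),
      Real.sqrt_nonneg ((n:ℝ) + 2)]
  have shift : ∑ n ∈ Finset.range N, ((n : ℝ) + 2) / 2 * ‖a (n + 2)‖ ^ 2
      ≤ ∑ n ∈ Finset.range N, (n : ℝ) / 2 * ‖a n‖ ^ 2 := by
    set g : ℕ → ℝ := fun m => (m : ℝ) / 2 * ‖a m‖ ^ 2 with hg
    have hshape : ∀ n : ℕ, ((n : ℝ) + 2) / 2 * ‖a (n + 2)‖ ^ 2 = g (n + 2) := by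
      intro n; simp only [hg]; push_cast; ring
    have e1 : ∑ i ∈ Finset.range (N + 2), g i
        = (∑ i ∈ Finset.range (N + 1), g (i + 1)) + g 0 := Finset.sum_range_succ' g (N + 1)
    have e2 : ∑ i ∈ Finset.range (N + 1), g (i + 1)
        = (∑ i ∈ Finset.range N, g (i + 2)) + g 1 :=
      Finset.sum_range_succ' (fun i => g (i + 1)) N
    have e3 : ∑ i ∈ Finset.range (N + 2), g i
        = ∑ i ∈ Finset.range N, g i := by
      rw [Finset.sum_range_succ, Finset.sum_range_succ]
      have hN1 : a N = 0 := hN N le_rfl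
      have hN2 : a (N + 1) = 0 := hN (N + 1) (Nat.le_succ N)
      simp [hg, hN1, hN2]
    have hg0 : (0:ℝ) ≤ g 0 := by positivity
    have hg1 : (0:ℝ) ≤ g 1 := by positivity
    calc ∑ n ∈ Finset.range N, ((n : ℝ) + 2) / 2 * ‖a (n + 2)‖ ^ 2
        = ∑ n ∈ Finset.range N, g (n + 2) := Finset.sum_congr rfl fun n _ => hshape n
      _ ≤ ∑ i ∈ Finset.range N, g i := by
          have := e1; rw [e2] at this; linarith [e3 ▸ this]
  calc |(∑ n ∈ Finset.range N, T n).re|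
      = |∑ n ∈ Finset.range N, (T n).re| := by rw [Complex.re_sum]
    _ ≤ ∑ n ∈ Finset.range N, |(T n).re| := Finset.abs_sum_le_sum_abs _ _
    _ ≤ ∑ n ∈ Finset.range N, ‖T n‖ := Finset.sum_le_sum fun n _ => Complex.abs_re_le_norm _
    _ ≤ ∑ n ∈ Finset.range N,
          (((n : ℝ) + 1) / 2 * ‖a n‖ ^ 2 + ((n : ℝ) + 2) / 2 * ‖a (n + 2)‖ ^ 2) :=
        Finset.sum_le_sum fun n _ => key n
    _ = (∑ n ∈ Finset.range N, ((n : ℝ) + 1) / 2 * ‖a n‖ ^ 2)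
          + ∑ n ∈ Finset.range N, ((n : ℝ) + 2) / 2 * ‖a (n + 2)‖ ^ 2 :=
        Finset.sum_add_distrib
    _ ≤ (∑ n ∈ Finset.range N, ((n : ℝ) + 1) / 2 * ‖a n‖ ^ 2)
          + ∑ n ∈ Finset.range N, (n : ℝ) / 2 * ‖a n‖ ^ 2 := by linarith [shift]
    _ = ∑ n ∈ Finset.range N, ((n : ℝ) + 1 / 2) * ‖a n‖ ^ 2 := by
        rw [← Finset.sum_add_distrib]
        exact Finset.sum_congr rfl fun n _ => by ring
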